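/- arXiv:2503.19411 — 2 statements merged into one kernel-verified Lean document; each statement's English description precedes it below -/
import Mathlib

section
/- If (G1, s1, t1) is S1-forcing and (G2, s2, t2) is S2-forcing with respect to C_n, then their serial sum (obtained by identifying t1 with s2, with terminals s1 and t2) is (S1 + S2)-forcing. -/
open Pointwise

/-- The cycle `C_n` on vertex set `ZMod n`: `u ~ v` iff `u ≠ v` and `u - v = ±1`. -/
def cycleGraph (n : ℕ) : SimpleGraph (ZMod n) :=
  SimpleGraph.fromRel (fun u v => u - v = 1)

/-- The forced set of a 2-terminal graph `(G, s, t)` with respect to `C_n`. -/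
def forcedSet (n : ℕ) {V : Type*} (G : SimpleGraph V) (s t : V) : Set (ZMod n) :=
  {x | ∃ φ : G →g cycleGraph n, φ s = 0 ∧ φ t = x}

/-- The serial sum of 2-terminal graphs `(G1,s1,t1)` and `(G2,s2,t2)`, obtained by
identifying `t1` with `s2`.  Its vertex set is `V1 ⊕ {v : V2 // v ≠ s2}`, with the
rôle of `s2` played by `Sum.inl t1`. -/
def serialSum {V1 V2 : Type*} (G1 : SimpleGraph V1) (G2 : SimpleGraph V2)
    (t1 : V1) (s2 : V2) : SimpleGraph (V1 ⊕ {v : V2 // v ≠ s2}) :=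
  SimpleGraph.fromRel (fun a b =>
    match a, b with
    | Sum.inl u, Sum.inl v => G1.Adj u v
    | Sum.inr u, Sum.inr v => G2.Adj u.1 v.1
    | Sum.inl u, Sum.inr v => u = t1 ∧ G2.Adj s2 v.1
    | Sum.inr _, Sum.inl _ => False)

lemma cycle_shift {n : ℕ} (c : ZMod n) {a b : ZMod n} (h : (cycleGraph n).Adj a b) :
    (cycleGraph n).Adj (a + c) (b + c) := by
  rw [cycleGraph, SimpleGraph.fromRel_adj] at h ⊢
  obtain ⟨hne, h⟩ := h
  refine ⟨by simpa using hne, ?_⟩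
  simpa using h

/-- If `(G1,s1,t1)` is `S1`-forcing and `(G2,s2,t2)` is `S2`-forcing
with respect to `C_n`, then their serial sum (terminals `s1` and `t2`) is
`(S1 + S2)`-forcing. -/
theorem stmt_7 (n : ℕ) {V1 V2 : Type*} (G1 : SimpleGraph V1) (G2 : SimpleGraph V2)
    (s1 t1 : V1) (s2 t2 : V2) (h1 : s1 ≠ t1) (h2 : s2 ≠ t2)
    (S1 S2 : Set (ZMod n))
    (hS1 : forcedSet n G1 s1 t1 = S1) (hS2 : forcedSet n G2 s2 t2 = S2) :
    forcedSet n (serialSum G1 G2 t1 s2) (Sum.inl s1) (Sum.inr ⟨t2, h2.symm⟩)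
      = S1 + S2 := by
  classical
  subst hS1 hS2
  ext x
  rw [Set.mem_add]
  constructor
  · rintro ⟨φ, hs, ht⟩
    set c := φ (Sum.inl t1) with hc
    refine ⟨c, ⟨⟨fun v => φ (Sum.inl v), fun {u v} h => φ.map_rel ?_⟩, hs, rfl⟩,
      x - c, ?_, by ring⟩
    · rw [serialSum, SimpleGraph.fromRel_adj]
      exact ⟨by simp [h.ne], Or.inl h⟩
    · let ψ : V2 → ZMod n := fun v => if h : v = s2 then c else φ (Sum.inr ⟨v, h⟩)
      have hψ : ∀ {u v : V2}, G2.Adj u v → (cycleGraph n).Adj (ψ u) (ψ v) := by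
        intro u v h
        by_cases hu : u = s2 <;> by_cases hv : v = s2
        · exact absurd (hu ▸ hv ▸ h) (G2.irrefl)
        · have : (serialSum G1 G2 t1 s2).Adj (Sum.inl t1) (Sum.inr ⟨v, hv⟩) := by
            rw [serialSum, SimpleGraph.fromRel_adj]
            exact ⟨by simp, Or.inl ⟨rfl, hu ▸ h⟩⟩
          simpa [ψ, hu, hv] using φ.map_rel this
        · have : (serialSum G1 G2 t1 s2).Adj (Sum.inl t1) (Sum.inr ⟨u, hu⟩) := by
            rw [serialSum, SimpleGraph.fromRel_adj]
            exact ⟨by simp, Or.inl ⟨rfl, hv ▸ h.symm⟩⟩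
          simpa [ψ, hu, hv] using (φ.map_rel this).symm
        · have : (serialSum G1 G2 t1 s2).Adj (Sum.inr ⟨u, hu⟩) (Sum.inr ⟨v, hv⟩) := by
            rw [serialSum, SimpleGraph.fromRel_adj]
            exact ⟨by simp [h.ne], Or.inl h⟩
          simpa [ψ, hu, hv] using φ.map_rel this
      refine ⟨⟨fun v => ψ v - c, fun {u v} h => by
        simpa [sub_eq_add_neg] using cycle_shift (-c) (hψ h)⟩, ?_, ?_⟩
      · show ψ s2 - c = 0
        simp [ψ]
      · show ψ t2 - c = x - c
        simp only [ψ]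
        rw [dif_neg h2.symm, ht]
  · rintro ⟨a, ⟨φ1, h1s, h1t⟩, b, ⟨φ2, h2s, h2t⟩, rfl⟩
    refine ⟨⟨Sum.elim φ1 (fun u => φ2 u.1 + a), ?_⟩, h1s, ?_⟩
    · intro p q hpq
      rw [serialSum, SimpleGraph.fromRel_adj] at hpq
      obtain ⟨hne, hrel⟩ := hpq
      cases p with
      | inl u => cases q with
        | inl v =>
          rcases hrel with h | h
          · exact φ1.map_rel h
          · exact (φ1.map_rel h).symm
        | inr v =>
          rcases hrel with ⟨rfl, h⟩ | h
          · have := cycle_shift a (φ2.map_rel h)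
            rw [h2s, zero_add] at this
            simpa [h1t] using this
          · exact h.elim
      | inr u => cases q with
        | inl v =>
          rcases hrel with h | ⟨rfl, h⟩
          · exact h.elim
          · have := cycle_shift a (φ2.map_rel h)
            rw [h2s, zero_add] at this
            simpa [h1t] using this.symm
        | inr v =>
          rcases hrel with h | h
          · exact cycle_shift a (φ2.map_rel h)
          · exact (cycle_shift a (φ2.map_rel h)).symm
    · show φ2 t2 + a = a + b
      rw [h2t, add_comm]
end

section
/- Let k >= 1 and let G be a C_{2k+1}-critical graph. If {s, t} is a vertex cut of G and H is a connected component of G - {s,t}, then the 2-terminal graph (G[V(H) ∪ {s,t}], s, t) is restricted, i.e., its forced set with respect to C_{2k+1} is a proper subset of Z_{2k+1}. -/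
/-- `G` is `C_n`-critical: `G` has no homomorphism to `C_n`, but every proper
subgraph of `G` does. -/
def IsCnCritical (n : ℕ) {V : Type*} (G : SimpleGraph V) : Prop :=
  ¬ Nonempty (G →g cycleGraph n) ∧
  ∀ H : G.Subgraph, H ≠ ⊤ → Nonempty (H.coe →g cycleGraph n)

/-- Rotation is an endomorphism of the cycle. -/
def cycleRot (n : ℕ) (a : ZMod n) : cycleGraph n →g cycleGraph n where
  toFun := fun x => x + a
  map_rel' := by
    intro u v h
    rw [cycleGraph, SimpleGraph.fromRel_adj] at h ⊢
    refine ⟨fun he => h.1 (by exact add_right_cancel he), ?_⟩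
    have h1 : u + a - (v + a) = u - v := by ring
    have h2 : v + a - (u + a) = v - u := by ring
    rw [h1, h2]; exact h.2

/-- Let `k ≥ 1`, `G` be `C_{2k+1}`-critical, `{s,t}` a vertex cut of
`G`, and `C` the vertex set of a connected component of `G - {s,t}`.  Then the
2-terminal graph `(G[C ∪ {s,t}], s, t)` is restricted: its forced set with respect
to `C_{2k+1}` is a proper subset of `Z_{2k+1}`. -/
theorem stmt_10 (k : ℕ) (hk : 1 ≤ k) {V : Type*} (G : SimpleGraph V)
    (hG : IsCnCritical (2 * k + 1) G) (s t : V) (hst : s ≠ t)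
    (hcut : ¬ (SimpleGraph.induce ({s, t}ᶜ : Set V) G).Connected)
    (C : Set V)
    (hC : ∃ K : (SimpleGraph.induce ({s, t}ᶜ : Set V) G).ConnectedComponent,
      C = Subtype.val ''
        {v | (SimpleGraph.induce ({s, t}ᶜ : Set V) G).connectedComponentMk v = K}) :
    forcedSet (2 * k + 1) (SimpleGraph.induce (C ∪ {s, t}) G)
        ⟨s, Set.mem_union_right _ (by simp)⟩ ⟨t, Set.mem_union_right _ (by simp)⟩
      ≠ Set.univ := by
  intro huniv
  obtain ⟨hno, hcrit⟩ := hG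
  apply hno
  obtain ⟨K, hCK⟩ := hC
  set n := 2 * k + 1 with hn
  -- basic facts about C
  have hCsub : C ⊆ ({s, t}ᶜ : Set V) := by
    rintro v hv
    rw [hCK] at hv
    obtain ⟨⟨w, hw⟩, _, rfl⟩ := hv
    exact hw
  have hsC : s ∉ C := fun h => hCsub h (by simp)
  have htC : t ∉ C := fun h => hCsub h (by simp)
  obtain ⟨v0, hv0⟩ := K.exists_rep
  have hv0C : (v0 : V) ∈ C := by
    rw [hCK]; exact ⟨v0, hv0, rfl⟩
  -- the subgraph induced on the complement of C
  let H : G.Subgraph := (⊤ : G.Subgraph).induce Cᶜ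
  have hHverts : H.verts = Cᶜ := rfl
  have hHne : H ≠ ⊤ := by
    intro h
    have : (v0 : V) ∈ H.verts := by rw [h]; trivial
    exact this hv0C
  obtain ⟨φ₀⟩ := hcrit H hHne
  have hsCc : s ∈ Cᶜ := hsC
  have htCc : t ∈ Cᶜ := htC
  -- rotate so that s maps to 0
  let φ : H.coe →g cycleGraph n := (cycleRot n (-(φ₀ ⟨s, hsCc⟩))).comp φ₀
  have hφs : φ ⟨s, hsCc⟩ = 0 := by
    show φ₀ ⟨s, hsCc⟩ + -(φ₀ ⟨s, hsCc⟩) = 0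
    ring
  set x : ZMod n := φ ⟨t, htCc⟩ with hx
  -- get ψ from the forced set being everything
  have hxmem : x ∈ forcedSet n (SimpleGraph.induce (C ∪ {s, t}) G)
      ⟨s, Set.mem_union_right _ (by simp)⟩ ⟨t, Set.mem_union_right _ (by simp)⟩ := by
    rw [huniv]; trivial
  obtain ⟨ψ, hψs, hψt⟩ := hxmem
  -- glue the maps
  classical
  let Φ : V → ZMod n := fun v =>
    if h : v ∈ C ∪ {s, t} then ψ ⟨v, h⟩
    else φ ⟨v, fun hvC => h (Or.inl hvC)⟩
  -- value lemmas
  have hΦin : ∀ (v : V) (h : v ∈ C ∪ {s, t}), Φ v = ψ ⟨v, h⟩ := by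
    intro v h; simp only [Φ, dif_pos h]
  have hΦout : ∀ (v : V) (h : v ∉ C ∪ {s, t}), Φ v = φ ⟨v, fun hvC => h (Or.inl hvC)⟩ := by
    intro v h; simp only [Φ, dif_neg h]
  have hΦs : Φ s = φ ⟨s, hsCc⟩ := by
    rw [hΦin s (Set.mem_union_right _ (by simp)), hψs, hφs]
  have hΦt : Φ t = φ ⟨t, htCc⟩ := by
    rw [hΦin t (Set.mem_union_right _ (by simp)), hψt]
  -- no edges leave C except to s, t
  have hkey : ∀ u v : V, u ∈ C → v ∉ C ∪ {s, t} → ¬ G.Adj u v := by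
    intro u v huC hv hadj
    have hvst : v ∈ ({s, t}ᶜ : Set V) := by
      intro hvst
      exact hv (Or.inr hvst)
    have hust : u ∈ ({s, t}ᶜ : Set V) := hCsub huC
    have hadj' : (SimpleGraph.induce ({s, t}ᶜ : Set V) G).Adj ⟨u, hust⟩ ⟨v, hvst⟩ := hadj
    have huK : (SimpleGraph.induce ({s, t}ᶜ : Set V) G).connectedComponentMk ⟨u, hust⟩ = K := by
      rw [hCK] at huC
      obtain ⟨⟨w, hw⟩, hwK, hwu⟩ := huC
      have hwu' : w = u := hwu
      subst hwu'
      exact hwK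
    have hvK : (SimpleGraph.induce ({s, t}ᶜ : Set V) G).connectedComponentMk ⟨v, hvst⟩ = K := by
      rw [← huK]
      exact SimpleGraph.ConnectedComponent.sound hadj'.symm.reachable
    exact hv (Or.inl (by rw [hCK]; exact ⟨⟨v, hvst⟩, hvK, rfl⟩))
  -- build the homomorphism
  have hmap : ∀ {u v : V}, G.Adj u v → (cycleGraph n).Adj (Φ u) (Φ v) := by
    intro u v hadj
    by_cases hu : u ∈ C ∪ {s, t} <;> by_cases hv : v ∈ C ∪ {s, t}
    · rw [hΦin u hu, hΦin v hv]
      exact ψ.map_rel hadj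
    · -- u in, v out
      rcases hu with huC | hust
      · exact absurd hadj (hkey u v huC hv)
      · have huCc : u ∈ Cᶜ := by
          rcases hust with h | h
          · subst h; exact hsCc
          · simp only [Set.mem_singleton_iff] at h; subst h; exact htCc
        have hvCc : v ∈ Cᶜ := fun hvC => hv (Or.inl hvC)
        have hΦu : Φ u = φ ⟨u, huCc⟩ := by
          rcases hust with h | h
          · subst h; exact hΦs
          · simp only [Set.mem_singleton_iff] at h; subst h; exact hΦt
        rw [hΦu, hΦout v hv]
        exact φ.map_rel ⟨huCc, hvCc, hadj⟩
    · -- v in, u out (symmetric)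
      rcases hv with hvC | hvst
      · exact absurd hadj.symm (hkey v u hvC hu)
      · have hvCc : v ∈ Cᶜ := by
          rcases hvst with h | h
          · subst h; exact hsCc
          · simp only [Set.mem_singleton_iff] at h; subst h; exact htCc
        have huCc : u ∈ Cᶜ := fun huC => hu (Or.inl huC)
        have hΦv : Φ v = φ ⟨v, hvCc⟩ := by
          rcases hvst with h | h
          · subst h; exact hΦs
          · simp only [Set.mem_singleton_iff] at h; subst h; exact hΦt
        rw [hΦv, hΦout u hu]
        exact φ.map_rel ⟨huCc, hvCc, hadj⟩
    · rw [hΦout u hu, hΦout v hv]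
      exact φ.map_rel ⟨fun huC => hu (Or.inl huC), fun hvC => hv (Or.inl hvC), hadj⟩
  exact ⟨⟨Φ, hmap⟩⟩
end
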